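/- Let φ : F₂ⁿ → ℤ be the homomorphism sending every standard basis element of each free factor to 1, and let H = ker(φ). Then H contains a subgroup isomorphic to F₂ⁿ. -/
import Mathlib

/-- The homomorphism `F₂ⁿ → ℤ` sending every standard basis element of every free factor
to `1` (written multiplicatively). -/
noncomputable def sumOfExponents (n : ℕ) :
    (Fin n → FreeGroup (Fin 2)) →* Multiplicative ℤ where
  toFun g := ∏ i, FreeGroup.lift (fun _ => Multiplicative.ofAdd (1 : ℤ)) (g i)
  map_one' := by simp
  map_mul' g h := by
    simp [Finset.prod_mul_distrib]

section aux

open FreeGroup SemidirectProduct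

/-- The shift action of `ℤ` on `FreeGroup ℤ`. -/
noncomputable def shiftAut : Multiplicative ℤ →* MulAut (FreeGroup ℤ) :=
  MonoidHom.mk'
    (fun k => (freeGroupCongr (Equiv.addRight k.toAdd) : MulAut (FreeGroup ℤ)))
    (by
      intro a b
      show _ = (freeGroupCongr (Equiv.addRight b.toAdd)).trans
        (freeGroupCongr (Equiv.addRight a.toAdd))
      rw [freeGroupCongr_trans]
      congr 1
      ext x
      simp [add_assoc, add_comm a.toAdd b.toAdd])

/-- The injective endomorphism of `F₂` sending `a ↦ b a⁻¹` and `b ↦ a b a⁻²`. -/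
noncomputable def kerEmb : FreeGroup (Fin 2) →* FreeGroup (Fin 2) :=
  FreeGroup.lift ![of 1 * (of 0)⁻¹, of 0 * of 1 * (of 0)⁻¹ * (of 0)⁻¹]

/-- The representation of `F₂` into `FreeGroup ℤ ⋊ ℤ`. -/
noncomputable def psi :
    FreeGroup (Fin 2) →* (FreeGroup ℤ ⋊[shiftAut] Multiplicative ℤ) :=
  FreeGroup.lift ![inr (Multiplicative.ofAdd 1),
    inl (of (0 : ℤ)) * inr (Multiplicative.ofAdd 1)]

lemma shiftAut_of (k m : ℤ) :
    shiftAut (Multiplicative.ofAdd k) (of m) = of (m + k) := by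
  simp [shiftAut, MonoidHom.mk'_apply]

lemma psi_conj :
    inr (Multiplicative.ofAdd (1:ℤ)) * inl (of (0 : ℤ))
      * (inr (Multiplicative.ofAdd (1:ℤ)))⁻¹
      = (inl (of (1 : ℤ)) : FreeGroup ℤ ⋊[shiftAut] Multiplicative ℤ) := by
  rw [← _root_.map_inv (inr : Multiplicative ℤ →* _), ← inl_aut, shiftAut_of]
  norm_num

lemma psi_comp_kerEmb :
    psi.comp kerEmb = (inl : FreeGroup ℤ →* _).comp (FreeGroup.map fun i : Fin 2 => (i : ℤ)) := by
  apply FreeGroup.ext_hom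
  intro a
  fin_cases a
  · show psi (kerEmb (of 0)) = inl (FreeGroup.map _ (of 0))
    rw [map.of]
    simp only [kerEmb, psi, FreeGroup.lift_apply_of, Matrix.cons_val_zero, Matrix.cons_val_one,
      Matrix.head_cons, _root_.map_mul, _root_.map_inv]
    rw [mul_inv_cancel_right]
    norm_num
  · show psi (kerEmb (of 1)) = inl (FreeGroup.map _ (of 1))
    rw [map.of]
    simp only [kerEmb, psi, FreeGroup.lift_apply_of, Matrix.cons_val_zero, Matrix.cons_val_one,
      Matrix.head_cons, _root_.map_mul, _root_.map_inv]
    have : ((1 : Fin 2) : ℤ) = 1 := by norm_num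
    rw [this, ← psi_conj]
    group

lemma kerEmb_injective : Function.Injective kerEmb := by
  have hm : Function.Injective (FreeGroup.map fun i : Fin 2 => (i : ℤ)) := by
    have : Function.LeftInverse
        (FreeGroup.map fun z : ℤ => if z = 0 then (0 : Fin 2) else 1)
        (FreeGroup.map fun i : Fin 2 => (i : ℤ)) := by
      intro x
      rw [map.comp]
      have : ((fun z : ℤ => if z = 0 then (0 : Fin 2) else 1) ∘ fun i : Fin 2 => (i : ℤ))
          = fun z => z := by
        funext i; fin_cases i <;> simp
      rw [this, map.id']
    exact this.injective
  have hcomp : Function.Injective (psi.comp kerEmb) := by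
    rw [psi_comp_kerEmb]
    exact inl_injective.comp hm
  intro x y hxy
  exact hcomp (by simp [MonoidHom.comp_apply, hxy])

lemma eps_kerEmb (x : FreeGroup (Fin 2)) :
    FreeGroup.lift (fun _ : Fin 2 => Multiplicative.ofAdd (1 : ℤ)) (kerEmb x) = 1 := by
  have h : (FreeGroup.lift (fun _ : Fin 2 => Multiplicative.ofAdd (1 : ℤ))).comp kerEmb
      = 1 := by
    apply FreeGroup.ext_hom
    intro a
    fin_cases a <;>
      simp [kerEmb, FreeGroup.lift_apply_of] <;> group
  calc FreeGroup.lift (fun _ : Fin 2 => Multiplicative.ofAdd (1 : ℤ)) (kerEmb x)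
      = ((FreeGroup.lift (fun _ : Fin 2 => Multiplicative.ofAdd (1 : ℤ))).comp kerEmb) x := rfl
    _ = 1 := by rw [h]; rfl

end aux

/-- the kernel `H` of the homomorphism `φ : F₂ⁿ → ℤ` sending all standard
generators to `1` contains a subgroup isomorphic to `F₂ⁿ`. -/
theorem kernel_contains_F2n (n : ℕ) :
    ∃ ι : (Fin n → FreeGroup (Fin 2)) →* (Fin n → FreeGroup (Fin 2)),
      Function.Injective ι ∧ ι.range ≤ (sumOfExponents n).ker := by
  refine ⟨Pi.monoidHom fun i => kerEmb.comp (Pi.evalMonoidHom (fun _ => FreeGroup (Fin 2)) i),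
    ?_, ?_⟩
  · intro g h hgh
    funext i
    exact kerEmb_injective (congrFun hgh i)
  · rintro x ⟨g, rfl⟩
    show sumOfExponents n _ = 1
    show (∏ i, FreeGroup.lift (fun _ => Multiplicative.ofAdd (1 : ℤ)) (kerEmb (g i))) = 1
    exact Finset.prod_eq_one fun i _ => eps_kerEmb (g i)
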